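/- Let x₀, y₀ ∈ ℝ and let u, g, h, p : [x₀,∞) × [y₀,∞) → [0,∞) be continuous. If u(x,y) ≤ g(x,y) + h(x,y) ∫_{x₀}^{x} ∫_{x₀}^{s} ∫_{y₀}^{y} p(η,τ) u(η,τ) dτ dη ds for all x ≥ x₀ and y ≥ y₀, then u(x,y) ≤ g(x,y) + h(x,y) · ( ∫_{x₀}^{x} ∫_{x₀}^{s} ∫_{y₀}^{y} p(η,τ) g(η,τ) dτ dη ds ) · exp( ∫_{x₀}^{x} ∫_{x₀}^{s} ∫_{y₀}^{y} p(η,τ) h(η,τ) dτ dη ds ) for all x ≥ x₀ and y ≥ y₀. -/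

import Mathlib

set_option maxHeartbeats 1000000

open MeasureTheory Set intervalIntegral

private lemma primitive_hasDerivAt {f : ℝ → ℝ} (hf : Continuous f) (x₀ t : ℝ) :
    HasDerivAt (fun x => ∫ s in x₀..x, f s) (f t) t :=
  intervalIntegral.integral_hasDerivAt_right (hf.intervalIntegrable _ _)
    (hf.stronglyMeasurableAtFilter _ _) hf.continuousAt

private lemma gron' (x₀ : ℝ) (q a k : ℝ → ℝ) (hq : Continuous q) (ha : Continuous a)
    (hk : Continuous k)
    (hq0 : ∀ t, x₀ ≤ t → 0 ≤ q t) (ha0 : ∀ t, x₀ ≤ t → 0 ≤ a t) (hk0 : ∀ t, x₀ ≤ t → 0 ≤ k t)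
    (hqak : ∀ t, x₀ ≤ t → q t ≤ a t + k t * ∫ s in x₀..t, ∫ η in x₀..s, q η) :
    ∀ x, x₀ ≤ x → (∫ s in x₀..x, ∫ η in x₀..s, q η) ≤
      (∫ s in x₀..x, ∫ η in x₀..s, a η) * Real.exp (∫ s in x₀..x, ∫ η in x₀..s, k η) := by
  intro x hx
  set m : ℝ → ℝ := fun s => ∫ η in x₀..s, q η with hmdef
  set A₁ : ℝ → ℝ := fun s => ∫ η in x₀..s, a η with hA₁def
  set κ : ℝ → ℝ := fun s => ∫ η in x₀..s, k η with hκdef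
  have hm : Continuous m := intervalIntegral.continuous_primitive (fun a b => hq.intervalIntegrable a b) x₀
  have hA₁ : Continuous A₁ := intervalIntegral.continuous_primitive (fun a b => ha.intervalIntegrable a b) x₀
  have hκ : Continuous κ := intervalIntegral.continuous_primitive (fun a b => hk.intervalIntegrable a b) x₀
  set R : ℝ → ℝ := fun t => ∫ s in x₀..t, m s with hRdef
  set A : ℝ → ℝ := fun t => ∫ s in x₀..t, A₁ s with hAdef
  set K : ℝ → ℝ := fun t => ∫ s in x₀..t, κ s with hKdef
  have hm0 : ∀ t, x₀ ≤ t → 0 ≤ m t := fun t ht =>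
    intervalIntegral.integral_nonneg ht (fun s hs => hq0 s hs.1)
  have hA₁0 : ∀ t, x₀ ≤ t → 0 ≤ A₁ t := fun t ht =>
    intervalIntegral.integral_nonneg ht (fun s hs => ha0 s hs.1)
  have hκ0 : ∀ t, x₀ ≤ t → 0 ≤ κ t := fun t ht =>
    intervalIntegral.integral_nonneg ht (fun s hs => hk0 s hs.1)
  have hR0 : ∀ t, x₀ ≤ t → 0 ≤ R t := fun t ht =>
    intervalIntegral.integral_nonneg ht (fun s hs => hm0 s hs.1)
  have hK0 : ∀ t, x₀ ≤ t → 0 ≤ K t := fun t ht =>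
    intervalIntegral.integral_nonneg ht (fun s hs => hκ0 s hs.1)
  have hRmono : ∀ s t, x₀ ≤ s → s ≤ t → R s ≤ R t := by
    intro s t hs hst
    have hsub : R t - R s = ∫ r in s..t, m r :=
      intervalIntegral.integral_interval_sub_left (hm.intervalIntegrable _ _)
        (hm.intervalIntegrable _ _)
    have : 0 ≤ ∫ r in s..t, m r :=
      intervalIntegral.integral_nonneg hst (fun r hr => hm0 r (hs.trans hr.1))
    linarith [hsub ▸ this]
  have hm_le : ∀ t, x₀ ≤ t → m t ≤ A₁ t + κ t * R t := by
    intro t ht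
    have step : m t ≤ ∫ η in x₀..t, (a η + k η * R t) := by
      apply intervalIntegral.integral_mono_on ht (hq.intervalIntegrable _ _)
        ((ha.add (hk.mul continuous_const)).intervalIntegrable _ _)
      intro η hη
      calc q η ≤ a η + k η * R η := hqak η hη.1
        _ ≤ a η + k η * R t := by
            have := mul_le_mul_of_nonneg_left (hRmono η t hη.1 hη.2) (hk0 η hη.1)
            linarith
    calc m t ≤ ∫ η in x₀..t, (a η + k η * R t) := step
      _ = A₁ t + κ t * R t := by
          rw [intervalIntegral.integral_add (g := fun η => k η * R t) (ha.intervalIntegrable _ _)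
            ((hk.mul continuous_const).intervalIntegrable _ _),
            intervalIntegral.integral_mul_const]
  set F : ℝ → ℝ := fun t => R t * Real.exp (-K t) - A t with hFdef
  have hF' : ∀ t, HasDerivAt F
      (m t * Real.exp (-K t) + R t * (Real.exp (-K t) * -(κ t)) - A₁ t) t := by
    intro t
    have h1 : HasDerivAt R (m t) t := primitive_hasDerivAt hm x₀ t
    have h2 : HasDerivAt K (κ t) t := primitive_hasDerivAt hκ x₀ t
    have h3 : HasDerivAt (fun s => Real.exp (-K s)) (Real.exp (-K t) * -(κ t)) t :=
      h2.neg.exp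
    have h4 : HasDerivAt A (A₁ t) t := primitive_hasDerivAt hA₁ x₀ t
    exact ((h1.mul h3).sub h4)
  have hdiff : Differentiable ℝ F := fun t => (hF' t).differentiableAt
  have hanti : AntitoneOn F (Ici x₀) := by
    apply antitoneOn_of_deriv_nonpos (convex_Ici x₀) hdiff.continuous.continuousOn
      hdiff.differentiableOn
    intro t ht
    rw [interior_Ici] at ht
    have ht' : x₀ ≤ t := ht.le
    rw [(hF' t).deriv]
    have hE1 : Real.exp (-K t) ≤ 1 := by
      have := Real.exp_le_exp.mpr (neg_nonpos.mpr (hK0 t ht'))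
      simpa using this
    have hEpos : (0:ℝ) < Real.exp (-K t) := Real.exp_pos _
    have hmt := hm_le t ht'
    nlinarith [mul_le_mul_of_nonneg_right hmt hEpos.le, hA₁0 t ht', hκ0 t ht', hR0 t ht']
  have hFx : F x ≤ F x₀ := hanti self_mem_Ici hx hx
  have hF0 : F x₀ = 0 := by
    simp [hFdef, hRdef, hAdef, intervalIntegral.integral_same]
  have hkey : R x * Real.exp (-K x) ≤ A x := by
    have := hFx
    rw [hF0] at this
    simp only [hFdef] at this
    linarith
  have h2 := mul_le_mul_of_nonneg_right hkey (Real.exp_pos (K x)).le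
  rwa [mul_assoc, ← Real.exp_add, neg_add_cancel, Real.exp_zero, mul_one] at h2

private lemma triple_congr {x₀ y₀ x y : ℝ} (hx : x₀ ≤ x) (hy : y₀ ≤ y) (f F : ℝ → ℝ → ℝ)
    (hEq : ∀ η τ, x₀ ≤ η → y₀ ≤ τ → f η τ = F η τ) :
    (∫ s in x₀..x, ∫ η in x₀..s, ∫ τ in y₀..y, f η τ) =
      ∫ s in x₀..x, ∫ η in x₀..s, ∫ τ in y₀..y, F η τ := by
  apply intervalIntegral.integral_congr
  intro s hs
  rw [uIcc_of_le hx] at hs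
  apply intervalIntegral.integral_congr
  intro η hη
  rw [uIcc_of_le hs.1] at hη
  apply intervalIntegral.integral_congr
  intro τ hτ
  rw [uIcc_of_le hy] at hτ
  exact hEq η τ hη.1 hτ.1

private lemma aux (x₀ y₀ : ℝ) (u g h p : ℝ → ℝ → ℝ)
    (hu : Continuous fun z : ℝ × ℝ => u z.1 z.2)
    (hgc : Continuous fun z : ℝ × ℝ => g z.1 z.2)
    (hhc : Continuous fun z : ℝ × ℝ => h z.1 z.2)
    (hpc : Continuous fun z : ℝ × ℝ => p z.1 z.2)
    (hu0 : ∀ x y, 0 ≤ u x y) (hg0 : ∀ x y, 0 ≤ g x y)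
    (hh0 : ∀ x y, 0 ≤ h x y) (hp0 : ∀ x y, 0 ≤ p x y)
    (hineq : ∀ x y, x₀ ≤ x → y₀ ≤ y →
      u x y ≤ g x y + h x y *
        ∫ s in x₀..x, ∫ η in x₀..s, ∫ τ in y₀..y, p η τ * u η τ) :
    ∀ x y, x₀ ≤ x → y₀ ≤ y →
      u x y ≤ g x y + h x y *
        (∫ s in x₀..x, ∫ η in x₀..s, ∫ τ in y₀..y, p η τ * g η τ) *
        Real.exp (∫ s in x₀..x, ∫ η in x₀..s, ∫ τ in y₀..y, p η τ * h η τ) := by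
  intro x y hx hy
  -- slice continuity helpers
  have hpu : ∀ t, Continuous fun τ => p t τ * u t τ := fun t =>
    (hpc.comp (Continuous.prodMk_right t)).mul (hu.comp (Continuous.prodMk_right t))
  have hpg : ∀ t, Continuous fun τ => p t τ * g t τ := fun t =>
    (hpc.comp (Continuous.prodMk_right t)).mul (hgc.comp (Continuous.prodMk_right t))
  have hph : ∀ t, Continuous fun τ => p t τ * h t τ := fun t =>
    (hpc.comp (Continuous.prodMk_right t)).mul (hhc.comp (Continuous.prodMk_right t))
  -- parametric integral continuity with fixed upper limit c
  have par : ∀ (c : ℝ), Continuous fun η => ∫ τ in y₀..c, p η τ * u η τ := by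
    intro c
    apply intervalIntegral.continuous_parametric_intervalIntegral_of_continuous'
    exact hpc.mul hu
  have hq : Continuous fun η => ∫ τ in y₀..y, p η τ * u η τ := par y
  have ha : Continuous fun η => ∫ τ in y₀..y, p η τ * g η τ := by
    apply intervalIntegral.continuous_parametric_intervalIntegral_of_continuous'
    exact hpc.mul hgc
  have hk : Continuous fun η => ∫ τ in y₀..y, p η τ * h η τ := by
    apply intervalIntegral.continuous_parametric_intervalIntegral_of_continuous'
    exact hpc.mul hhc
  have hq0 : ∀ t, x₀ ≤ t → 0 ≤ ∫ τ in y₀..y, p t τ * u t τ := fun t _ =>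
    intervalIntegral.integral_nonneg hy (fun τ _ => mul_nonneg (hp0 _ _) (hu0 _ _))
  have ha0 : ∀ t, x₀ ≤ t → 0 ≤ ∫ τ in y₀..y, p t τ * g t τ := fun t _ =>
    intervalIntegral.integral_nonneg hy (fun τ _ => mul_nonneg (hp0 _ _) (hg0 _ _))
  have hk0 : ∀ t, x₀ ≤ t → 0 ≤ ∫ τ in y₀..y, p t τ * h t τ := fun t _ =>
    intervalIntegral.integral_nonneg hy (fun τ _ => mul_nonneg (hp0 _ _) (hh0 _ _))
  -- Z(η,τ) ≤ R(η) for y₀ ≤ τ ≤ y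
  have hZle : ∀ η τ, x₀ ≤ η → y₀ ≤ τ → τ ≤ y →
      (∫ s in x₀..η, ∫ η' in x₀..s, ∫ τ' in y₀..τ, p η' τ' * u η' τ') ≤
      ∫ s in x₀..η, ∫ η' in x₀..s, ∫ τ' in y₀..y, p η' τ' * u η' τ' := by
    intro η τ hη hτ₀ hτ
    have inner : ∀ s, x₀ ≤ s →
        (∫ η' in x₀..s, ∫ τ' in y₀..τ, p η' τ' * u η' τ') ≤
        ∫ η' in x₀..s, ∫ τ' in y₀..y, p η' τ' * u η' τ' := by
      intro s hs
      apply intervalIntegral.integral_mono_on hs ((par τ).intervalIntegrable _ _)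
        ((par y).intervalIntegrable _ _)
      intro η' _
      have hint : IntervalIntegrable (fun τ' => p η' τ' * u η' τ') MeasureTheory.volume y₀ y :=
        (hpu η').intervalIntegrable _ _
      exact intervalIntegral.integral_mono_interval (le_refl y₀) hτ₀ hτ
        (Filter.Eventually.of_forall (fun τ' => mul_nonneg (hp0 _ _) (hu0 _ _))) hint
    apply intervalIntegral.integral_mono_on hη
      ((intervalIntegral.continuous_primitive
        (fun a b => (par τ).intervalIntegrable a b) x₀).intervalIntegrable _ _)
      ((intervalIntegral.continuous_primitive
        (fun a b => (par y).intervalIntegrable a b) x₀).intervalIntegrable _ _)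
    intro s hs
    exact inner s hs.1
  -- key pointwise bound
  have hqak : ∀ t, x₀ ≤ t →
      (∫ τ in y₀..y, p t τ * u t τ) ≤ (∫ τ in y₀..y, p t τ * g t τ) +
        (∫ τ in y₀..y, p t τ * h t τ) *
          ∫ s in x₀..t, ∫ η in x₀..s, ∫ τ in y₀..y, p η τ * u η τ := by
    intro t ht
    set c : ℝ := ∫ s in x₀..t, ∫ η in x₀..s, ∫ τ in y₀..y, p η τ * u η τ with hcdef
    have int0 : IntervalIntegrable (fun τ => p t τ * u t τ) MeasureTheory.volume y₀ y :=
      (hpu t).intervalIntegrable _ _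
    have int1 : IntervalIntegrable (fun τ => p t τ * g t τ) MeasureTheory.volume y₀ y :=
      (hpg t).intervalIntegrable _ _
    have int2 : IntervalIntegrable (fun τ => p t τ * h t τ * c) MeasureTheory.volume y₀ y :=
      ((hph t).mul continuous_const).intervalIntegrable _ _
    have step : (∫ τ in y₀..y, p t τ * u t τ) ≤
        ∫ τ in y₀..y, (p t τ * g t τ + p t τ * h t τ * c) := by
      apply intervalIntegral.integral_mono_on hy int0 (int1.add int2)
      intro τ hτ
      have hu_le : u t τ ≤ g t τ + h t τ * c := by
        calc u t τ ≤ g t τ + h t τ *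
            ∫ s in x₀..t, ∫ η in x₀..s, ∫ τ' in y₀..τ, p η τ' * u η τ' :=
              hineq t τ ht hτ.1
          _ ≤ g t τ + h t τ * c := by
              have := mul_le_mul_of_nonneg_left (hZle t τ ht hτ.1 hτ.2) (hh0 t τ)
              linarith
      have := mul_le_mul_of_nonneg_left hu_le (hp0 t τ)
      rw [mul_add, ← mul_assoc] at this
      exact this
    calc (∫ τ in y₀..y, p t τ * u t τ)
        ≤ ∫ τ in y₀..y, (p t τ * g t τ + p t τ * h t τ * c) := step
      _ = (∫ τ in y₀..y, p t τ * g t τ) + (∫ τ in y₀..y, p t τ * h t τ) * c := by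
          rw [intervalIntegral.integral_add int1 int2, intervalIntegral.integral_mul_const]
  have main := gron' x₀ _ _ _ hq ha hk hq0 ha0 hk0 hqak x hx
  have hfin := hineq x y hx hy
  have := mul_le_mul_of_nonneg_left main (hh0 x y)
  calc u x y ≤ g x y + h x y *
      ∫ s in x₀..x, ∫ η in x₀..s, ∫ τ in y₀..y, p η τ * u η τ := hfin
    _ ≤ g x y + h x y *
        (∫ s in x₀..x, ∫ η in x₀..s, ∫ τ in y₀..y, p η τ * g η τ) *
        Real.exp (∫ s in x₀..x, ∫ η in x₀..s, ∫ τ in y₀..y, p η τ * h η τ) := by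
      rw [mul_assoc]; linarith

/-- Continuous (𝕋₁ = 𝕋₂ = ℝ) case of Theorem 2.4: the linear-kernel special
case L(η,τ,u) = p(η,τ)·u of Theorem 2.3. -/
theorem stmt_6 (x₀ y₀ : ℝ) (u g h p : ℝ → ℝ → ℝ)
    (hu_cont : ContinuousOn (fun z : ℝ × ℝ => u z.1 z.2) (Set.Ici x₀ ×ˢ Set.Ici y₀))
    (hg_cont : ContinuousOn (fun z : ℝ × ℝ => g z.1 z.2) (Set.Ici x₀ ×ˢ Set.Ici y₀))
    (hh_cont : ContinuousOn (fun z : ℝ × ℝ => h z.1 z.2) (Set.Ici x₀ ×ˢ Set.Ici y₀))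
    (hp_cont : ContinuousOn (fun z : ℝ × ℝ => p z.1 z.2) (Set.Ici x₀ ×ˢ Set.Ici y₀))
    (hu_nonneg : ∀ x y, x₀ ≤ x → y₀ ≤ y → 0 ≤ u x y)
    (hg_nonneg : ∀ x y, x₀ ≤ x → y₀ ≤ y → 0 ≤ g x y)
    (hh_nonneg : ∀ x y, x₀ ≤ x → y₀ ≤ y → 0 ≤ h x y)
    (hp_nonneg : ∀ x y, x₀ ≤ x → y₀ ≤ y → 0 ≤ p x y)
    (hineq : ∀ x y, x₀ ≤ x → y₀ ≤ y →
      u x y ≤ g x y + h x y *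
        ∫ s in x₀..x, ∫ η in x₀..s, ∫ τ in y₀..y, p η τ * u η τ) :
    ∀ x y, x₀ ≤ x → y₀ ≤ y →
      u x y ≤ g x y + h x y *
        (∫ s in x₀..x, ∫ η in x₀..s, ∫ τ in y₀..y, p η τ * g η τ) *
        Real.exp (∫ s in x₀..x, ∫ η in x₀..s, ∫ τ in y₀..y, p η τ * h η τ) := by
  -- clamp all functions onto the quadrant to get global continuity
  have hmap : ∀ z : ℝ × ℝ, (max z.1 x₀, max z.2 y₀) ∈ Set.Ici x₀ ×ˢ Set.Ici y₀ :=
    fun z => ⟨show x₀ ≤ max z.1 x₀ from le_max_right _ _, show y₀ ≤ max z.2 y₀ from le_max_right _ _⟩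
  have hcm : Continuous fun z : ℝ × ℝ => ((max z.1 x₀, max z.2 y₀) : ℝ × ℝ) :=
    (continuous_fst.max continuous_const).prodMk (continuous_snd.max continuous_const)
  have clamp : ∀ (f : ℝ → ℝ → ℝ), ContinuousOn (fun z : ℝ × ℝ => f z.1 z.2)
      (Set.Ici x₀ ×ˢ Set.Ici y₀) →
      Continuous fun z : ℝ × ℝ => f (max z.1 x₀) (max z.2 y₀) :=
    fun f hf => hf.comp_continuous hcm hmap
  -- congruence of triple integrals for clamped vs original integrands
  have congrf : ∀ (f1 f2 : ℝ → ℝ → ℝ) (x y : ℝ), x₀ ≤ x → y₀ ≤ y →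
      (∫ s in x₀..x, ∫ η in x₀..s, ∫ τ in y₀..y,
        p (max η x₀) (max τ y₀) * f1 (max η x₀) (max τ y₀)) =
      ∫ s in x₀..x, ∫ η in x₀..s, ∫ τ in y₀..y, p η τ * f1 η τ := by
    intro f1 f2 x y hx hy
    exact triple_congr hx hy _ _ (fun η τ h1 h2 => by rw [max_eq_left h1, max_eq_left h2])
  intro x y hx hy
  have key := aux x₀ y₀ (fun a b => u (max a x₀) (max b y₀)) (fun a b => g (max a x₀) (max b y₀))
      (fun a b => h (max a x₀) (max b y₀)) (fun a b => p (max a x₀) (max b y₀))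
      (clamp u hu_cont) (clamp g hg_cont) (clamp h hh_cont) (clamp p hp_cont)
      (fun a b => hu_nonneg _ _ (le_max_right _ _) (le_max_right _ _))
      (fun a b => hg_nonneg _ _ (le_max_right _ _) (le_max_right _ _))
      (fun a b => hh_nonneg _ _ (le_max_right _ _) (le_max_right _ _))
      (fun a b => hp_nonneg _ _ (le_max_right _ _) (le_max_right _ _))
      ?_ x y hx hy
  · simp only [max_eq_left hx, max_eq_left hy] at key
    have e1 := congrf g g x y hx hy
    have e2 := congrf h h x y hx hy
    have e3 : (∫ s in x₀..x, ∫ η in x₀..s, ∫ τ in y₀..y,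
        (fun a b => p (max a x₀) (max b y₀)) η τ * (fun a b => g (max a x₀) (max b y₀)) η τ) =
        ∫ s in x₀..x, ∫ η in x₀..s, ∫ τ in y₀..y, p η τ * g η τ := e1
    rw [show (∫ s in x₀..x, ∫ η in x₀..s, ∫ τ in y₀..y,
        p (max η x₀) (max τ y₀) * g (max η x₀) (max τ y₀)) =
        ∫ s in x₀..x, ∫ η in x₀..s, ∫ τ in y₀..y, p η τ * g η τ from e1,
      show (∫ s in x₀..x, ∫ η in x₀..s, ∫ τ in y₀..y,
        p (max η x₀) (max τ y₀) * h (max η x₀) (max τ y₀)) =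
        ∫ s in x₀..x, ∫ η in x₀..s, ∫ τ in y₀..y, p η τ * h η τ from e2] at key
    exact key
  · intro a b ha hb
    simp only [max_eq_left ha, max_eq_left hb]
    rw [congrf u u a b ha hb]
    exact hineq a b ha hb
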